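/- arXiv:1603.07841 — 3 statements merged into one kernel-verified Lean document; each statement's English description precedes it below -/
import Mathlib

section
/- Let 0 < q ≤ ∞, 0 < μ ≤ q and α > 0. Suppose {a_k}_{k∈ℕ₀} and {b_k}_{k∈ℕ₀} are sequences of real numbers such that |b_k| ≤ C₀ (Σ_{j=k+1}^{∞} |a_j|^μ)^{1/μ} for all k ∈ ℕ₀. Then (Σ_{k=0}^{∞} 2^{kαq} |b_k|^q)^{1/q} ≤ C (Σ_{k=0}^{∞} 2^{kαq} |a_k|^q)^{1/q} (with the sup-modification when q = ∞), where C > 0 depends only on C₀, α, μ, q and not on the sequences {a_k}, {b_k}. -/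
open MeasureTheory ENNReal Filter Topology

noncomputable section

def lqNorm (q : ℝ≥0∞) (a : ℕ → ℝ≥0∞) : ℝ≥0∞ :=
  if q = ∞ then ⨆ k, a k else (∑' k, a k ^ q.toReal) ^ (1 / q.toReal)

def lpSum {ι : Type*} (p : ℝ≥0∞) (a : ι → ℝ≥0∞) : ℝ≥0∞ :=
  if p = ∞ then ⨆ m, a m else (∑' m, a m ^ p.toReal) ^ (1 / p.toReal)

lemma holder_tsum {p q : ℝ} (hpq : Real.HolderConjugate p q) (f g : ℕ → ℝ≥0∞) :
    ∑' i, f i * g i ≤ (∑' i, f i ^ p) ^ (1 / p) * (∑' i, g i ^ q) ^ (1 / q) := by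
  have h := ENNReal.lintegral_mul_le_Lp_mul_Lq (Measure.count : Measure ℕ) hpq
    (measurable_from_nat (f := f)).aemeasurable (measurable_from_nat (f := g)).aemeasurable
  simpa [lintegral_count] using h

lemma jensen_tsum {p : ℝ} (hp : 1 ≤ p) (w X : ℕ → ℝ≥0∞) :
    (∑' j, w j * X j) ^ p ≤ (∑' j, w j) ^ (p - 1) * ∑' j, w j * X j ^ p := by
  rcases eq_or_lt_of_le hp with h1 | h1
  · rw [← h1]
    simp
  · have hpq : Real.HolderConjugate p (Real.conjExponent p) := Real.HolderConjugate.conjExponent h1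
    set q := Real.conjExponent p with hqdef
    have hp0 : p ≠ 0 := hpq.pos.ne'
    have hq0 : q ≠ 0 := hpq.symm.pos.ne'
    have key : ∀ j, w j * X j = w j ^ (1/q) * (w j ^ (1/p) * X j) := by
      intro j
      rw [← mul_assoc, ← ENNReal.rpow_add_of_nonneg _ _ (one_div_nonneg.2 hpq.symm.pos.le)
        (one_div_nonneg.2 hpq.pos.le)]
      rw [one_div, one_div, add_comm, hpq.inv_add_inv_eq_one, ENNReal.rpow_one]
    have hqp : q⁻¹ * p = p - 1 := by
      have hp1 : p - 1 ≠ 0 := sub_ne_zero.2 h1.ne'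
      rw [hqdef, Real.conjExponent]
      field_simp
    calc (∑' j, w j * X j) ^ p
        = (∑' j, w j ^ (1/q) * (w j ^ (1/p) * X j)) ^ p := by rw [tsum_congr key]
      _ ≤ ((∑' j, (w j ^ (1/q)) ^ q) ^ (1/q) * (∑' j, (w j ^ (1/p) * X j) ^ p) ^ (1/p)) ^ p :=
          ENNReal.rpow_le_rpow (holder_tsum hpq.symm _ _) (zero_le_one.trans hp)
      _ = (∑' j, w j) ^ (p - 1) * ∑' j, w j * X j ^ p := by
          have e1 : ∀ j, (w j ^ (1/q)) ^ q = w j := by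
            intro j
            rw [← ENNReal.rpow_mul, one_div, inv_mul_cancel₀ hq0, ENNReal.rpow_one]
          have e2 : ∀ j, (w j ^ (1/p) * X j) ^ p = w j * X j ^ p := by
            intro j
            rw [ENNReal.mul_rpow_of_nonneg _ _ (by positivity), ← ENNReal.rpow_mul, one_div,
              inv_mul_cancel₀ hp0, ENNReal.rpow_one]
          rw [tsum_congr e1, tsum_congr e2,
            ENNReal.mul_rpow_of_nonneg _ _ (by positivity), ← ENNReal.rpow_mul,
            ← ENNReal.rpow_mul, one_div, one_div, inv_mul_cancel₀ hp0, ENNReal.rpow_one, hqp]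

/-- discrete Hardy inequality, second case. -/
theorem hardy_inequality_case_two (q : ℝ≥0∞) (hq : 0 < q)
    (μ α C₀ : ℝ) (hμ : 0 < μ) (hμq : ENNReal.ofReal μ ≤ q)
    (hα : 0 < α) (hC₀ : 0 < C₀) :
    ∃ C : ℝ, 0 < C ∧ ∀ a b : ℕ → ℝ,
      (∀ k : ℕ, ENNReal.ofReal |b k| ≤ ENNReal.ofReal C₀ *
          (∑' j : ℕ, ENNReal.ofReal (|a (k + 1 + j)| ^ μ)) ^ (1 / μ)) →
      lqNorm q (fun k => ENNReal.ofReal (2 ^ ((k : ℝ) * α) * |b k|)) ≤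
        ENNReal.ofReal C *
          lqNorm q (fun k => ENNReal.ofReal (2 ^ ((k : ℝ) * α) * |a k|)) := by
  classical
  set c : ℝ := α * μ with hcdef
  have hc : 0 < c := mul_pos hα hμ
  set x : ℝ≥0∞ := (2 : ℝ≥0∞) ^ (-c) with hxdef
  have hx0 : x ≠ 0 := (ENNReal.rpow_pos (by norm_num) ENNReal.ofNat_ne_top).ne'
  have hx_top : x ≠ ∞ := by
    rw [hxdef, ENNReal.rpow_neg]
    exact ENNReal.inv_ne_top.2 (ENNReal.rpow_pos (by norm_num) ENNReal.ofNat_ne_top).ne'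
  have hx1 : x < 1 := by
    have : (2 : ℝ≥0∞) ^ (-c) < (2 : ℝ≥0∞) ^ (0 : ℝ) :=
      ENNReal.rpow_lt_rpow_of_exponent_lt (by norm_num) ENNReal.ofNat_ne_top (by linarith)
    simpa using this
  set w : ℕ → ℝ≥0∞ := fun j => x ^ (j + 1) with hwdef
  set S : ℝ≥0∞ := ∑' j, w j with hSdef
  have hS_eq : S = x * (1 - x)⁻¹ := ENNReal.tsum_geometric_add_one x
  have h1x : (1 : ℝ≥0∞) - x ≠ 0 := (tsub_pos_of_lt hx1).ne'
  have hS_top : S ≠ ∞ := by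
    rw [hS_eq]
    exact ENNReal.mul_ne_top hx_top (ENNReal.inv_ne_top.2 h1x)
  have hS0 : S ≠ 0 := by
    rw [hS_eq]
    refine mul_ne_zero hx0 (ENNReal.inv_ne_zero.2 ?_)
    exact (lt_of_le_of_lt tsub_le_self ENNReal.one_lt_top).ne
  have hStoReal : 0 < S.toReal := ENNReal.toReal_pos hS0 hS_top
  refine ⟨C₀ * S.toReal ^ (1/μ), by positivity, ?_⟩
  have hofC : ENNReal.ofReal (C₀ * S.toReal ^ (1/μ)) = ENNReal.ofReal C₀ * S ^ (1/μ) := by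
    rw [ENNReal.ofReal_mul hC₀.le, ← ENNReal.ofReal_rpow_of_pos hStoReal,
      ENNReal.ofReal_toReal hS_top]
  intro a b hb
  set e : ℕ → ℝ≥0∞ := fun m => (2 : ℝ≥0∞) ^ ((m : ℝ) * α) with hedef
  set A : ℕ → ℝ≥0∞ := fun m => ENNReal.ofReal (2 ^ ((m : ℝ) * α) * |a m|) with hAdef
  have htwo : ∀ s t : ℝ, (2 : ℝ≥0∞) ^ s * (2 : ℝ≥0∞) ^ t = (2 : ℝ≥0∞) ^ (s + t) := by
    intro s t
    rw [ENNReal.rpow_add s t (by norm_num) ENNReal.ofNat_ne_top]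
  have hofpow : ∀ s : ℝ, ENNReal.ofReal ((2:ℝ) ^ s) = (2 : ℝ≥0∞) ^ s := by
    intro s
    rw [← ENNReal.ofReal_rpow_of_pos (by norm_num : (0:ℝ) < 2)]
    norm_num
  have hsplit : ∀ (m : ℕ) (t : ℝ), ENNReal.ofReal (2 ^ ((m : ℝ) * α) * t) =
      e m * ENNReal.ofReal t := by
    intro m t
    rw [ENNReal.ofReal_mul (Real.rpow_nonneg (by norm_num) _), hofpow]
  have hwj : ∀ j : ℕ, w j = (2 : ℝ≥0∞) ^ (-(((j : ℝ) + 1) * c)) := by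
    intro j
    show x ^ (j + 1) = _
    rw [← ENNReal.rpow_natCast x (j+1), hxdef, ← ENNReal.rpow_mul]
    push_cast
    ring_nf
  -- key pointwise estimate
  have hpt : ∀ k : ℕ, ENNReal.ofReal (2 ^ ((k : ℝ) * α) * |b k|) ≤
      ENNReal.ofReal C₀ * (∑' j, w j * A (k+1+j) ^ μ) ^ (1/μ) := by
    intro k
    rw [hsplit]
    calc e k * ENNReal.ofReal |b k|
        ≤ e k * (ENNReal.ofReal C₀ *
            (∑' j : ℕ, ENNReal.ofReal (|a (k + 1 + j)| ^ μ)) ^ (1 / μ)) :=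
          mul_le_mul_right (hb k) _
      _ = ENNReal.ofReal C₀ *
            (e k * (∑' j : ℕ, ENNReal.ofReal (|a (k + 1 + j)| ^ μ)) ^ (1 / μ)) := by ring
      _ = ENNReal.ofReal C₀ * (∑' j, w j * A (k+1+j) ^ μ) ^ (1/μ) := by
          congr 1
          have hek : e k = (e k ^ μ) ^ (1/μ) := by
            rw [← ENNReal.rpow_mul, mul_one_div_cancel hμ.ne', ENNReal.rpow_one]
          have hsum : (∑' j : ℕ, e k ^ μ * ENNReal.ofReal (|a (k + 1 + j)| ^ μ)) =
              ∑' j, w j * A (k+1+j) ^ μ := by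
            refine tsum_congr fun j => ?_
            have hterm : ENNReal.ofReal (|a (k + 1 + j)| ^ μ) =
                ENNReal.ofReal |a (k + 1 + j)| ^ μ :=
              (ENNReal.ofReal_rpow_of_nonneg (abs_nonneg _) hμ.le).symm
            rw [hterm, hAdef]
            simp only
            rw [hsplit, ENNReal.mul_rpow_of_nonneg _ _ hμ.le, hwj, hedef]
            simp only
            rw [← ENNReal.rpow_mul, ← ENNReal.rpow_mul, ← mul_assoc, htwo]
            congr 2
            push_cast
            ring
          rw [hek, ← ENNReal.mul_rpow_of_nonneg _ _ (by positivity : (0:ℝ) ≤ 1/μ),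
            ← ENNReal.tsum_mul_left, hsum]
  by_cases hqtop : q = ∞
  · -- case q = ∞
    subst hqtop
    simp only [lqNorm, if_pos rfl]
    set M : ℝ≥0∞ := ⨆ m, A m with hM
    refine iSup_le fun k => (hpt k).trans ?_
    have hTk : (∑' j, w j * A (k+1+j) ^ μ) ≤ S * M ^ μ := by
      rw [hSdef, ← ENNReal.tsum_mul_right]
      refine ENNReal.tsum_le_tsum fun j => ?_
      exact mul_le_mul_right (ENNReal.rpow_le_rpow (le_iSup A (k+1+j)) hμ.le) _
    calc ENNReal.ofReal C₀ * (∑' j, w j * A (k+1+j) ^ μ) ^ (1/μ)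
        ≤ ENNReal.ofReal C₀ * (S * M ^ μ) ^ (1/μ) := by
          gcongr
      _ = ENNReal.ofReal (C₀ * S.toReal ^ (1/μ)) * M := by
          rw [hofC, ENNReal.mul_rpow_of_nonneg _ _ (by positivity), ← ENNReal.rpow_mul,
            mul_one_div_cancel hμ.ne', ENNReal.rpow_one, mul_assoc]
  · -- case q < ∞
    have hr : 0 < q.toReal := ENNReal.toReal_pos hq.ne' hqtop
    set r : ℝ := q.toReal with hrdef
    have hμr : μ ≤ r := by
      have := ENNReal.toReal_mono hqtop hμq
      rwa [ENNReal.toReal_ofReal hμ.le] at this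
    set p : ℝ := r / μ with hpdef
    have hp1 : 1 ≤ p := (one_le_div hμ).2 hμr
    have hμp : μ * p = r := by
      rw [hpdef]
      field_simp
    simp only [lqNorm, if_neg hqtop, ← hrdef]
    set SA : ℝ≥0∞ := ∑' m, A m ^ r with hSA
    set T : ℕ → ℝ≥0∞ := fun k => ∑' j, w j * A (k+1+j) ^ μ with hT
    have step1 : ∀ k : ℕ, ENNReal.ofReal (2 ^ ((k : ℝ) * α) * |b k|) ^ r ≤
        ENNReal.ofReal C₀ ^ r * T k ^ p := by
      intro k
      calc ENNReal.ofReal (2 ^ ((k : ℝ) * α) * |b k|) ^ r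
          ≤ (ENNReal.ofReal C₀ * T k ^ (1/μ)) ^ r := ENNReal.rpow_le_rpow (hpt k) hr.le
        _ = ENNReal.ofReal C₀ ^ r * T k ^ p := by
            rw [ENNReal.mul_rpow_of_nonneg _ _ hr.le, ← ENNReal.rpow_mul, one_div,
              inv_mul_eq_div, ← hpdef]
    have step2 : ∀ k : ℕ, T k ^ p ≤ S ^ (p - 1) * ∑' j, w j * A (k+1+j) ^ r := by
      intro k
      have := jensen_tsum hp1 w (fun j => A (k+1+j) ^ μ)
      simp only [← ENNReal.rpow_mul, hμp] at this
      exact this.trans_eq (by rw [hSdef])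
    have step3 : (∑' k, ∑' j, w j * A (k+1+j) ^ r) ≤ S * SA := by
      rw [ENNReal.tsum_comm]
      calc (∑' j, ∑' k, w j * A (k+1+j) ^ r)
          = ∑' j, w j * ∑' k, A (k+1+j) ^ r := by
            exact tsum_congr fun j => ENNReal.tsum_mul_left
        _ ≤ ∑' j, w j * SA := by
            refine ENNReal.tsum_le_tsum fun j => mul_le_mul_right ?_ _
            exact ENNReal.tsum_comp_le_tsum_of_injective
              (f := fun k : ℕ => k + 1 + j) (fun x y h => by simp only at h; omega) (fun m => A m ^ r)
        _ = S * SA := by rw [ENNReal.tsum_mul_right, hSdef]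
    have main : (∑' k : ℕ, ENNReal.ofReal (2 ^ ((k : ℝ) * α) * |b k|) ^ r) ≤
        ENNReal.ofReal C₀ ^ r * (S ^ p * SA) := by
      calc (∑' k : ℕ, ENNReal.ofReal (2 ^ ((k : ℝ) * α) * |b k|) ^ r)
          ≤ ∑' k, ENNReal.ofReal C₀ ^ r * T k ^ p := ENNReal.tsum_le_tsum step1
        _ = ENNReal.ofReal C₀ ^ r * ∑' k, T k ^ p := ENNReal.tsum_mul_left
        _ ≤ ENNReal.ofReal C₀ ^ r * ∑' k, (S ^ (p-1) * ∑' j, w j * A (k+1+j) ^ r) :=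
            mul_le_mul_right (ENNReal.tsum_le_tsum step2) _
        _ = ENNReal.ofReal C₀ ^ r * (S ^ (p-1) * ∑' k, ∑' j, w j * A (k+1+j) ^ r) := by
            rw [ENNReal.tsum_mul_left]
        _ ≤ ENNReal.ofReal C₀ ^ r * (S ^ (p-1) * (S * SA)) :=
            mul_le_mul_right (mul_le_mul_right step3 _) _
        _ = ENNReal.ofReal C₀ ^ r * (S ^ p * SA) := by
            rw [← mul_assoc (S ^ (p-1))]
            congr 2
            nth_rewrite 2 [← ENNReal.rpow_one S]
            rw [← ENNReal.rpow_add_of_nonneg _ _ (by linarith) zero_le_one]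
            norm_num
    calc (∑' k : ℕ, ENNReal.ofReal (2 ^ ((k : ℝ) * α) * |b k|) ^ r) ^ (1/r)
        ≤ (ENNReal.ofReal C₀ ^ r * (S ^ p * SA)) ^ (1/r) :=
          ENNReal.rpow_le_rpow main (by positivity)
      _ = ENNReal.ofReal (C₀ * S.toReal ^ (1/μ)) * SA ^ (1/r) := by
          rw [ENNReal.mul_rpow_of_nonneg _ _ (by positivity),
            ENNReal.mul_rpow_of_nonneg _ _ (by positivity), ← ENNReal.rpow_mul,
            ← ENNReal.rpow_mul, mul_one_div_cancel hr.ne', ENNReal.rpow_one, hofC]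
          have hpr : p * (1/r) = 1/μ := by
            rw [hpdef]
            field_simp
          rw [hpr, mul_assoc]
end
end

section
/- Let p ∈ (0,∞], σ₁ ∈ (0,∞), σ₂ ∈ (0,∞], α₁, α₂ ∈ ℝ, α₃ ≥ 0, and let {t_k} be a p-admissible weight sequence such that {t̄_k} ∈ 𝒳^{α₃}_{α,σ,p}, where α = (α₁,α₂), σ = (σ₁,σ₂). Then for all 0 ≤ k ≤ j and all m ∈ ℤⁿ: t_{k,m} (Σ_{m̃ ∈ ℤⁿ : Q_{j,m̃} ⊂ Q_{k,m}} t_{j,m̃}^{-σ₁})^{1/σ₁} ≤ C 2^{(α₁ - n/p - n/σ₁)(k-j)}, where C > 0 depends only on n, p, σ₁ and the constants in the definition of 𝒳^{α₃}_{α,σ,p}, and not on k, j, m. -/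
open MeasureTheory ENNReal Filter Topology

noncomputable section

def dyadicCube (n k : ℕ) (m : Fin n → ℤ) : Set (Fin n → ℝ) :=
  {x | ∀ i, (m i : ℝ) / 2 ^ k ≤ x i ∧ x i ≤ ((m i : ℝ) + 1) / 2 ^ k}

def dilatedCube (n : ℕ) (c : ℝ) (k : ℕ) (m : Fin n → ℤ) : Set (Fin n → ℝ) :=
  {x | ∀ i, |x i - ((m i : ℝ) + 1 / 2) / 2 ^ k| ≤ c / (2 * 2 ^ k)}

def tkm (n : ℕ) (p : ℝ≥0∞) (t : ℕ → (Fin n → ℝ) → ℝ) (k : ℕ) (m : Fin n → ℤ) : ℝ≥0∞ :=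
  eLpNorm (t k) p (volume.restrict (dyadicCube n k m))

def PAdmissible (n : ℕ) (p : ℝ≥0∞) (t : ℕ → (Fin n → ℝ) → ℝ) : Prop :=
  (∀ k, Measurable (t k)) ∧ (∀ k, ∀ᵐ x : Fin n → ℝ, 0 < t k x) ∧
    ∀ k m, tkm n p t k m < ∞

def MemX (n : ℕ) (p σ₁ σ₂ : ℝ≥0∞) (α₁ α₂ α₃ : ℝ) (t : ℕ → (Fin n → ℝ) → ℝ) : Prop :=
  PAdmissible n p t ∧
  (∃ C₁ : ℝ, 0 < C₁ ∧ ∀ k j : ℕ, k ≤ j → ∀ m : Fin n → ℤ,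
    (((2 : ℝ≥0∞) ^ (k * n)) ^ p⁻¹.toReal * tkm n p t k m) *
      (((2 : ℝ≥0∞) ^ (k * n)) ^ σ₁⁻¹.toReal *
        eLpNorm (fun x => (t j x)⁻¹) σ₁ (volume.restrict (dyadicCube n k m)))
      ≤ ENNReal.ofReal (C₁ * 2 ^ (α₁ * ((k : ℝ) - (j : ℝ))))) ∧
  (∃ C₂ : ℝ, 0 < C₂ ∧ ∀ k j : ℕ, k ≤ j → ∀ m : Fin n → ℤ,
    ((2 : ℝ≥0∞) ^ (k * n)) ^ σ₂⁻¹.toReal *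
        eLpNorm (t j) σ₂ (volume.restrict (dyadicCube n k m))
      ≤ ENNReal.ofReal (C₂ * 2 ^ (α₂ * ((j : ℝ) - (k : ℝ)))) *
        (((2 : ℝ≥0∞) ^ (k * n)) ^ p⁻¹.toReal * tkm n p t k m)) ∧
  (∀ k m, 0 < tkm n p t k m) ∧
  (∀ (k : ℕ) (m m' : Fin n → ℤ), (∀ i, |m i - m' i| ≤ 1) →
    tkm n p t k m ≤ ENNReal.ofReal (2 ^ α₃) * tkm n p t k m')

def tbar (n : ℕ) (p : ℝ≥0∞) (t : ℕ → (Fin n → ℝ) → ℝ) (k : ℕ) (x : Fin n → ℝ) : ℝ :=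
  (2 : ℝ) ^ (((k * n : ℕ) : ℝ) / p.toReal) * (tkm n p t k fun i => ⌊x i * 2 ^ k⌋).toReal


namespace WeightAux

/-! ### powers of two in `ℝ≥0∞` -/

def pw (x : ℝ) : ℝ≥0∞ := ENNReal.ofReal ((2 : ℝ) ^ x)

lemma two_rpow_pos (x : ℝ) : (0:ℝ) < 2 ^ x := Real.rpow_pos_of_pos two_pos x

lemma pw_mul (x y : ℝ) : pw x * pw y = pw (x + y) := by
  rw [pw, pw, pw, ← ENNReal.ofReal_mul (two_rpow_pos x).le, ← Real.rpow_add two_pos]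

lemma pw_rpow (x e : ℝ) : pw x ^ e = pw (x * e) := by
  rw [pw, pw, ENNReal.ofReal_rpow_of_pos (two_rpow_pos x), ← Real.rpow_mul (by norm_num)]

lemma pw_zero : pw 0 = 1 := by simp [pw]

lemma pw_ne_top (x : ℝ) : pw x ≠ ∞ := ENNReal.ofReal_ne_top

lemma pw_ne_zero (x : ℝ) : pw x ≠ 0 := by
  simp only [pw, ne_eq, ENNReal.ofReal_eq_zero, not_le]; exact two_rpow_pos x

lemma pw_cancel (x : ℝ) : pw (-x) * pw x = 1 := by
  rw [pw_mul, neg_add_cancel, pw_zero]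

lemma pw_inv (x : ℝ) : (pw x)⁻¹ = pw (-x) := by
  rw [pw, pw, Real.rpow_neg (by norm_num), ENNReal.ofReal_inv_of_pos (two_rpow_pos x)]

lemma pw_natmul (a : ℕ) : ((2 : ℝ≥0∞) ^ a) = pw a := by
  rw [pw, Real.rpow_natCast, ENNReal.ofReal_pow (by norm_num)]
  norm_num

/-! ### cube geometry -/

def Q (n k : ℕ) (m : Fin n → ℤ) : Set (Fin n → ℝ) :=
  Set.univ.pi fun i => Set.Ico ((m i : ℝ) / 2 ^ k) (((m i : ℝ) + 1) / 2 ^ k)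

lemma mem_Q {n k : ℕ} {m : Fin n → ℤ} {x : Fin n → ℝ} :
    x ∈ Q n k m ↔ ∀ i, (m i : ℝ) / 2 ^ k ≤ x i ∧ x i < ((m i : ℝ) + 1) / 2 ^ k := by
  simp [Q, Set.mem_pi]

lemma measurable_Q (n k : ℕ) (m : Fin n → ℤ) : MeasurableSet (Q n k m) :=
  MeasurableSet.univ_pi fun _ => measurableSet_Ico

lemma mem_Q_iff_floor {n k : ℕ} {m : Fin n → ℤ} {x : Fin n → ℝ} :
    x ∈ Q n k m ↔ (fun i => ⌊x i * 2 ^ k⌋) = m := by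
  rw [mem_Q, funext_iff]
  refine forall_congr' fun i => ?_
  rw [Int.floor_eq_iff]
  have h2 : (0:ℝ) < 2 ^ k := by positivity
  rw [div_le_iff₀ h2, lt_div_iff₀ h2]

lemma volume_Q (n k : ℕ) (m : Fin n → ℤ) :
    volume (Q n k m) = pw (-((k*n : ℕ) : ℝ)) := by
  rw [Q, volume_pi_pi, pw]
  have h : ∀ i : Fin n, volume (Set.Ico ((m i : ℝ) / 2 ^ k) (((m i : ℝ) + 1) / 2 ^ k))
      = ENNReal.ofReal ((2:ℝ)^(-(k:ℝ))) := by
    intro i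
    rw [Real.volume_Ico]
    congr 1
    rw [div_sub_div_same]
    rw [Real.rpow_neg (by norm_num), Real.rpow_natCast]
    ring
  simp only [h, Finset.prod_const, Finset.card_univ, Fintype.card_fin]
  rw [← ENNReal.ofReal_pow (by positivity), ← Real.rpow_natCast ((2:ℝ)^(-(k:ℝ))) n,
    ← Real.rpow_mul (by norm_num)]
  push_cast
  ring_nf

lemma dyadicCube_eq_pi (n k : ℕ) (m : Fin n → ℤ) :
    dyadicCube n k m =
      Set.univ.pi fun i => Set.Icc ((m i : ℝ) / 2 ^ k) (((m i : ℝ) + 1) / 2 ^ k) := by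
  ext x
  simp only [dyadicCube, Set.mem_setOf_eq, Set.mem_pi, Set.mem_univ, Set.mem_Icc, forall_const]

lemma Q_subset (n k : ℕ) (m : Fin n → ℤ) : Q n k m ⊆ dyadicCube n k m := by
  intro x hx i
  have := hx i (Set.mem_univ i)
  exact ⟨this.1, this.2.le⟩

lemma volume_dyadicCube_eq (n k : ℕ) (m : Fin n → ℤ) :
    volume (dyadicCube n k m) = volume (Q n k m) := by
  rw [dyadicCube_eq_pi, Q, volume_pi_pi, volume_pi_pi]
  simp [Real.volume_Icc, Real.volume_Ico]

lemma ae_eq_Q (n k : ℕ) (m : Fin n → ℤ) : dyadicCube n k m =ᵐ[volume] Q n k m := by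
  rw [Filter.eventuallyEq_set]
  have h1 : volume (dyadicCube n k m \ Q n k m) = 0 := by
    rw [measure_diff (Q_subset n k m) (measurable_Q n k m).nullMeasurableSet]
    · rw [volume_dyadicCube_eq, tsub_self]
    · rw [Q, volume_pi_pi]
      exact ENNReal.prod_ne_top fun i _ => by simp [Real.volume_Ico]
  have h2 : ∀ᵐ x, x ∉ dyadicCube n k m \ Q n k m := measure_eq_zero_iff_ae_notMem.mp h1
  filter_upwards [h2] with x hx
  exact ⟨fun hxd => by by_contra hq; exact hx ⟨hxd, hq⟩, fun hq => Q_subset n k m hq⟩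

lemma restrict_dyadic_eq (n k : ℕ) (m : Fin n → ℤ) :
    volume.restrict (dyadicCube n k m) = volume.restrict (Q n k m) :=
  Measure.restrict_congr_set (ae_eq_Q n k m)

/-! ### inclusion condition -/

def Cond (n k j : ℕ) (m m' : Fin n → ℤ) : Prop :=
  ∀ i, m i * 2 ^ (j - k) ≤ m' i ∧ m' i + 1 ≤ (m i + 1) * 2 ^ (j - k)

lemma cast_div_eq {k j : ℕ} (hkj : k ≤ j) (a : ℤ) :
    (a : ℝ) / 2 ^ k = ((a * 2 ^ (j - k) : ℤ) : ℝ) / 2 ^ j := by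
  have h : (2:ℝ) ^ j = 2 ^ (j - k) * 2 ^ k := by
    rw [← pow_add]; congr 1; omega
  push_cast
  rw [h]
  field_simp

lemma div_le_iff_int {k j : ℕ} (hkj : k ≤ j) (a b : ℤ) :
    (a : ℝ) / 2 ^ k ≤ (b : ℝ) / 2 ^ j ↔ a * 2 ^ (j - k) ≤ b := by
  rw [cast_div_eq hkj a, div_le_div_iff_of_pos_right (by positivity), Int.cast_le]

lemma lt_div_iff_int {k j : ℕ} (hkj : k ≤ j) (a b : ℤ) :
    (b : ℝ) / 2 ^ j < (a : ℝ) / 2 ^ k ↔ b < a * 2 ^ (j - k) := by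
  rw [cast_div_eq hkj a, div_lt_div_iff_of_pos_right (by positivity), Int.cast_lt]

lemma div_lt_iff_int {k j : ℕ} (hkj : k ≤ j) (a b : ℤ) :
    (a : ℝ) / 2 ^ k < (b : ℝ) / 2 ^ j ↔ a * 2 ^ (j - k) < b := by
  rw [cast_div_eq hkj a, div_lt_div_iff_of_pos_right (by positivity), Int.cast_lt]

lemma le_div_iff_int {k j : ℕ} (hkj : k ≤ j) (a b : ℤ) :
    (b : ℝ) / 2 ^ j ≤ (a : ℝ) / 2 ^ k ↔ b ≤ a * 2 ^ (j - k) := by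
  rw [cast_div_eq hkj a, div_le_div_iff_of_pos_right (by positivity), Int.cast_le]

lemma subset_iff_cond {n k j : ℕ} (hkj : k ≤ j) (m m' : Fin n → ℤ) :
    dyadicCube n j m' ⊆ dyadicCube n k m ↔ Cond n k j m m' := by
  constructor
  · intro h i
    have hstep : ∀ b : ℤ, (b : ℝ) / 2 ^ j ≤ ((b : ℝ) + 1) / 2 ^ j := by
      intro b; gcongr; norm_num
    have hx : (fun i => (m' i : ℝ) / 2 ^ j) ∈ dyadicCube n j m' := fun i =>
      ⟨le_refl _, hstep _⟩
    have hy : (fun i => ((m' i : ℝ) + 1) / 2 ^ j) ∈ dyadicCube n j m' := fun i =>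
      ⟨hstep _, le_refl _⟩
    have h1 := (h hx i).1
    have h2 := (h hy i).2
    rw [div_le_iff_int hkj] at h1
    rw [show ((m' i : ℝ) + 1) = ((m' i + 1 : ℤ) : ℝ) by push_cast; ring,
      show ((m i : ℝ) + 1) = ((m i + 1 : ℤ) : ℝ) by push_cast; ring,
      le_div_iff_int hkj] at h2
    exact ⟨h1, h2⟩
  · intro h x hx i
    obtain ⟨h1, h2⟩ := h i
    obtain ⟨hx1, hx2⟩ := hx i
    refine ⟨le_trans ((div_le_iff_int hkj (m i) (m' i)).mpr h1) hx1, le_trans hx2 ?_⟩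
    have := (le_div_iff_int hkj (m i + 1) (m' i + 1)).mpr h2
    push_cast at this
    exact this

lemma cond_of_nonempty_inter {n k j : ℕ} (hkj : k ≤ j) {m m' : Fin n → ℤ}
    (h : (Q n k m ∩ Q n j m').Nonempty) : Cond n k j m m' := by
  obtain ⟨x, hxm, hxm'⟩ := h
  rw [mem_Q] at hxm hxm'
  intro i
  obtain ⟨a1, a2⟩ := hxm i
  obtain ⟨b1, b2⟩ := hxm' i
  constructor
  · have : (m i : ℝ) / 2 ^ k < ((m' i : ℝ) + 1) / 2 ^ j := lt_of_le_of_lt a1 b2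
    rw [show ((m' i : ℝ) + 1) = ((m' i + 1 : ℤ) : ℝ) by push_cast; ring,
      div_lt_iff_int hkj] at this
    omega
  · have : (m' i : ℝ) / 2 ^ j < ((m i : ℝ) + 1) / 2 ^ k := lt_of_le_of_lt b1 a2
    rw [show ((m i : ℝ) + 1) = ((m i + 1 : ℤ) : ℝ) by push_cast; ring,
      lt_div_iff_int hkj] at this
    omega

lemma Q_subset_of_cond {n k j : ℕ} (hkj : k ≤ j) {m m' : Fin n → ℤ}
    (h : Cond n k j m m') : Q n j m' ⊆ Q n k m := by
  intro x hx
  rw [mem_Q] at hx ⊢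
  intro i
  obtain ⟨h1, h2⟩ := h i
  obtain ⟨hx1, hx2⟩ := hx i
  refine ⟨le_trans ((div_le_iff_int hkj (m i) (m' i)).mpr h1) hx1, lt_of_lt_of_le hx2 ?_⟩
  have := (le_div_iff_int hkj (m i + 1) (m' i + 1)).mpr h2
  push_cast at this
  exact this

/-! ### partition of a cube into finer half-open cubes -/

lemma Q_eq_iUnion {n k j : ℕ} (hkj : k ≤ j) (m : Fin n → ℤ) :
    Q n k m = ⋃ m' : {m' : Fin n → ℤ // dyadicCube n j m' ⊆ dyadicCube n k m}, Q n j m'.1 := by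
  ext x
  constructor
  · intro hx
    set f : Fin n → ℤ := fun i => ⌊x i * 2 ^ j⌋ with hf
    have hxf : x ∈ Q n j f := mem_Q_iff_floor.mpr rfl
    have hcond : Cond n k j m f := cond_of_nonempty_inter hkj ⟨x, hx, hxf⟩
    exact Set.mem_iUnion.mpr ⟨⟨f, (subset_iff_cond hkj m f).mpr hcond⟩, hxf⟩
  · intro hx
    obtain ⟨m', hxm'⟩ := Set.mem_iUnion.mp hx
    exact Q_subset_of_cond hkj ((subset_iff_cond hkj m m'.1).mp m'.2) hxm'

lemma Q_pairwise_disjoint {n j : ℕ} {P : (Fin n → ℤ) → Prop} :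
    Pairwise (Function.onFun Disjoint fun m' : {m' : Fin n → ℤ // P m'} => Q n j m'.1) := by
  intro a b hab
  rw [Function.onFun]
  rw [Set.disjoint_left]
  intro x hxa hxb
  apply hab
  apply Subtype.ext
  rw [← mem_Q_iff_floor.mp hxa, ← mem_Q_iff_floor.mp hxb]


lemma tkm_tbar {n : ℕ} {p : ℝ≥0∞} (hp : p ≠ 0) (t : ℕ → (Fin n → ℝ) → ℝ) (k : ℕ)
    (m : Fin n → ℤ) (hfin : tkm n p t k m ≠ ∞) :
    tkm n p (tbar n p t) k m = tkm n p t k m := by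
  have hne : volume.restrict (Q n k m) ≠ 0 := by
    rw [ne_eq, Measure.restrict_eq_zero, volume_Q]; exact pw_ne_zero _
  have hconst : tbar n p t k =ᵐ[volume.restrict (Q n k m)]
      fun _ => (2:ℝ) ^ (((k*n : ℕ):ℝ)/p.toReal) * (tkm n p t k m).toReal := by
    filter_upwards [self_mem_ae_restrict (measurable_Q n k m)] with x hx
    rw [tbar, mem_Q_iff_floor.mp hx]
  rw [tkm, restrict_dyadic_eq, eLpNorm_congr_ae hconst, eLpNorm_const _ hp hne,
    Measure.restrict_apply_univ, volume_Q,
    Real.enorm_eq_ofReal (by positivity),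
    ENNReal.ofReal_mul (two_rpow_pos _).le, ENNReal.ofReal_toReal hfin, pw_rpow]
  have h1 : ENNReal.ofReal ((2:ℝ) ^ (((k*n : ℕ):ℝ)/p.toReal)) = pw (((k*n : ℕ):ℝ)/p.toReal) :=
    rfl
  rw [h1]
  calc pw (((k*n : ℕ):ℝ)/p.toReal) * tkm n p t k m
        * pw (-((k*n : ℕ):ℝ) * (1/p.toReal))
      = (pw (-(((k*n : ℕ):ℝ)/p.toReal)) * pw (((k*n : ℕ):ℝ)/p.toReal)) * tkm n p t k m := by
        rw [show (-((k*n : ℕ):ℝ) * (1/p.toReal)) = -(((k*n : ℕ):ℝ)/p.toReal) by ring]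
        ring
    _ = tkm n p t k m := by rw [pw_cancel, one_mul]


lemma eLpNorm_inv_tbar {n : ℕ} {p σ₁ : ℝ≥0∞} (hσ1 : σ₁ ≠ 0) (hσ1t : σ₁ ≠ ∞)
    (t : ℕ → (Fin n → ℝ) → ℝ) {k j : ℕ} (hkj : k ≤ j)
    (hpos : ∀ m', tkm n p t j m' ≠ 0) (hfin : ∀ m', tkm n p t j m' ≠ ∞) (m : Fin n → ℤ) :
    eLpNorm (fun x => (tbar n p t j x)⁻¹) σ₁ (volume.restrict (dyadicCube n k m))
      = pw (-(((j*n : ℕ):ℝ)/p.toReal) - ((j*n : ℕ):ℝ)/σ₁.toReal) *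
        (∑' m' : {m' : Fin n → ℤ // dyadicCube n j m' ⊆ dyadicCube n k m},
            (tkm n p t j m'.1)⁻¹ ^ σ₁.toReal) ^ (1/σ₁.toReal) := by
  set σ' := σ₁.toReal with hσ'def
  have hσ' : 0 < σ' := ENNReal.toReal_pos hσ1 hσ1t
  set J : ℝ := ((j*n : ℕ):ℝ) with hJdef
  set d : ℝ := J / p.toReal with hddef
  rw [eLpNorm_eq_lintegral_rpow_enorm_toReal hσ1 hσ1t, restrict_dyadic_eq]
  have key : (∫⁻ x in Q n k m, ‖(tbar n p t j x)⁻¹‖ₑ ^ σ' ∂volume)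
      = ∑' m' : {m' : Fin n → ℤ // dyadicCube n j m' ⊆ dyadicCube n k m},
          (pw (-d) * (tkm n p t j m'.1)⁻¹) ^ σ' * pw (-J) := by
    have hunion := lintegral_iUnion (μ := (volume : Measure (Fin n → ℝ)))
      (s := fun m' : {m' : Fin n → ℤ // dyadicCube n j m' ⊆ dyadicCube n k m} => Q n j m'.1)
      (fun m' => measurable_Q n j m'.1) Q_pairwise_disjoint
      (fun x => ‖(tbar n p t j x)⁻¹‖ₑ ^ σ')
    rw [Q_eq_iUnion hkj m, hunion]
    refine tsum_congr fun m' => ?_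
    have hptwise : ∀ x ∈ Q n j m'.1, ‖(tbar n p t j x)⁻¹‖ₑ ^ σ'
        = (pw (-d) * (tkm n p t j m'.1)⁻¹) ^ σ' := by
      intro x hx
      congr 1
      have hτ : (0:ℝ) < (tkm n p t j m'.1).toReal :=
        ENNReal.toReal_pos (hpos m'.1) (hfin m'.1)
      rw [tbar, mem_Q_iff_floor.mp hx,
        Real.enorm_eq_ofReal (by positivity),
        mul_inv, ENNReal.ofReal_mul (by positivity),
        ← Real.rpow_neg (by norm_num),
        ENNReal.ofReal_inv_of_pos hτ, ENNReal.ofReal_toReal (hfin m'.1)]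
      rfl
    rw [setLIntegral_congr_fun (measurable_Q n j m'.1) hptwise,
      setLIntegral_const, volume_Q]
  rw [key]
  have hterm : ∀ m' : {m' : Fin n → ℤ // dyadicCube n j m' ⊆ dyadicCube n k m},
      (pw (-d) * (tkm n p t j m'.1)⁻¹) ^ σ' * pw (-J)
        = (pw (-d) ^ σ' * pw (-J)) * ((tkm n p t j m'.1)⁻¹ ^ σ') := by
    intro m'
    rw [ENNReal.mul_rpow_of_nonneg _ _ hσ'.le]
    ring
  rw [tsum_congr hterm, ENNReal.tsum_mul_left,
    ENNReal.mul_rpow_of_nonneg _ _ (by positivity : (0:ℝ) ≤ 1/σ'),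
    ENNReal.mul_rpow_of_nonneg _ _ (by positivity : (0:ℝ) ≤ 1/σ'),
    pw_rpow, pw_rpow, pw_rpow, pw_mul]
  congr 2
  field_simp
  ring

end WeightAux

open WeightAux in
/-- estimate (2.7) for the sums of reciprocal local norms. -/
theorem weight_sum_estimate (n : ℕ) (p σ₁ σ₂ : ℝ≥0∞) (α₁ α₂ α₃ : ℝ)
    (hp : 0 < p) (hσ₁ : 0 < σ₁) (hσ₁fin : σ₁ ≠ ∞) (hσ₂ : 0 < σ₂) (hα₃ : 0 ≤ α₃)
    (t : ℕ → (Fin n → ℝ) → ℝ) (hadm : PAdmissible n p t)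
    (ht : MemX n p σ₁ σ₂ α₁ α₂ α₃ (tbar n p t)) :
    ∃ C : ℝ, 0 < C ∧ ∀ k j : ℕ, k ≤ j → ∀ m : Fin n → ℤ,
      tkm n p t k m *
        (∑' m' : {m' : Fin n → ℤ // dyadicCube n j m' ⊆ dyadicCube n k m},
            (tkm n p t j m'.1)⁻¹ ^ σ₁.toReal) ^ (1 / σ₁.toReal) ≤
      ENNReal.ofReal
        (C * 2 ^ ((α₁ - n / p.toReal - n / σ₁.toReal) * ((k : ℝ) - (j : ℝ)))) := by
  obtain ⟨C₁, hC₁, hC⟩ := ht.2.1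
  refine ⟨C₁, hC₁, fun k j hkj m => ?_⟩
  have hC' := hC k j hkj m
  have hfinj : ∀ m', tkm n p t j m' ≠ ∞ := fun m' => (hadm.2.2 j m').ne
  have htb : ∀ (l : ℕ) (m₀ : Fin n → ℤ), tkm n p (tbar n p t) l m₀ = tkm n p t l m₀ :=
    fun l m₀ => tkm_tbar hp.ne' t l m₀ (hadm.2.2 l m₀).ne
  have hposj : ∀ m', tkm n p t j m' ≠ 0 := fun m' => by
    have h0 := ht.2.2.2.1 j m'
    rw [htb j m'] at h0
    exact h0.ne'
  set S := (∑' m' : {m' : Fin n → ℤ // dyadicCube n j m' ⊆ dyadicCube n k m},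
      (tkm n p t j m'.1)⁻¹ ^ σ₁.toReal) ^ (1 / σ₁.toReal) with hS
  rw [pw_natmul (k*n), htb k m,
    eLpNorm_inv_tbar hσ₁.ne' hσ₁fin t hkj hposj hfinj m,
    ENNReal.toReal_inv, ENNReal.toReal_inv, pw_rpow, pw_rpow] at hC'
  set K : ℝ := ((k*n : ℕ):ℝ) with hK
  set J : ℝ := ((j*n : ℕ):ℝ) with hJ
  set E : ℝ := -(J/p.toReal) - J/σ₁.toReal with hE
  set γ : ℝ := K * p.toReal⁻¹ + K * σ₁.toReal⁻¹ + E with hγ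
  have hrw : (pw (K * p.toReal⁻¹) * tkm n p t k m) * (pw (K * σ₁.toReal⁻¹) * (pw E * S))
      = pw γ * (tkm n p t k m * S) := by
    rw [hγ, ← pw_mul, ← pw_mul]
    ring
  rw [hrw] at hC'
  calc tkm n p t k m * S
      = pw (-γ) * (pw γ * (tkm n p t k m * S)) := by
        rw [← mul_assoc, pw_cancel, one_mul]
    _ ≤ pw (-γ) * ENNReal.ofReal (C₁ * 2 ^ (α₁ * ((k:ℝ) - (j:ℝ)))) := mul_le_mul_right hC' _
    _ = ENNReal.ofReal (C₁ * 2 ^ ((α₁ - n / p.toReal - n / σ₁.toReal) * ((k:ℝ) - (j:ℝ)))) := by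
        rw [pw, ← ENNReal.ofReal_mul (two_rpow_pos _).le]
        congr 1
        rw [show (2:ℝ)^(-γ) * (C₁ * 2^(α₁ * ((k:ℝ) - (j:ℝ))))
            = C₁ * ((2:ℝ)^(α₁ * ((k:ℝ) - (j:ℝ))) * (2:ℝ)^(-γ)) by ring,
          ← Real.rpow_add two_pos]
        congr 1
        rw [hγ, hE, hK, hJ]
        push_cast
        ring
end
end

section
/- Let p, σ₁, σ₂ ∈ (0,∞], α₁, α₂ ∈ ℝ, α₃ ≥ 0, and let {t_k} be a p-admissible weight sequence such that {t̄_k} ∈ 𝒳^{α₃}_{α,σ,p}, where α = (α₁,α₂), σ = (σ₁,σ₂). Then for every pair j ≥ k ≥ 0 and every m, m̃ ∈ ℤⁿ with Q_{j,m̃} ⊂ Q_{k,m}: (1/C) t_{j,m̃} ≤ t_{k,m} ≤ C t_{j,m̃}, where C > 0 depends only on n, p, σ, α, α₃, the constants in the definition of 𝒳^{α₃}_{α,σ,p}, and on the difference j − k (but not on k, m, m̃). -/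
open MeasureTheory ENNReal Filter Topology

noncomputable section

lemma dyadicCube_eq_pi (n k : ℕ) (m : Fin n → ℤ) :
    dyadicCube n k m = Set.pi Set.univ (fun i => Set.Icc ((m i : ℝ) / 2 ^ k) (((m i : ℝ) + 1) / 2 ^ k)) := by
  ext x; simp only [dyadicCube, Set.mem_setOf_eq, Set.mem_pi, Set.mem_univ, Set.mem_Icc,
    forall_const]

lemma volume_dyadicCube (n k : ℕ) (m : Fin n → ℤ) :
    volume (dyadicCube n k m) = ((2 : ℝ≥0∞) ^ (k * n))⁻¹ := by
  rw [dyadicCube_eq_pi, volume_pi_pi]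
  have h : ∀ i : Fin n, volume (Set.Icc ((m i : ℝ) / 2 ^ k) (((m i : ℝ) + 1) / 2 ^ k))
      = ((2 : ℝ≥0∞) ^ k)⁻¹ := by
    intro i
    rw [Real.volume_Icc]
    have : ((m i : ℝ) + 1) / 2 ^ k - (m i : ℝ) / 2 ^ k = (2 ^ k : ℝ)⁻¹ := by
      field_simp
      ring
    rw [this, ENNReal.ofReal_inv_of_pos (by positivity), ENNReal.ofReal_pow (by norm_num)]
    norm_num
  simp only [h, Finset.prod_const, Finset.card_univ, Fintype.card_fin]
  rw [← ENNReal.inv_pow, ← pow_mul]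



lemma measurableSet_dyadicCube (n k : ℕ) (m : Fin n → ℤ) :
    MeasurableSet (dyadicCube n k m) := by
  rw [dyadicCube_eq_pi]
  exact MeasurableSet.univ_pi (fun i => measurableSet_Icc)

lemma volume_dyadicCube_ne_zero (n k : ℕ) (m : Fin n → ℤ) :
    volume (dyadicCube n k m) ≠ 0 := by
  rw [volume_dyadicCube]
  simp [ENNReal.inv_ne_zero, ENNReal.pow_ne_top]

lemma measure_eval_eq_zero (n : ℕ) (i : Fin n) (c : ℝ) :
    volume {x : Fin n → ℝ | x i = c} = 0 := by
  classical
  have hsub : {x : Fin n → ℝ | x i = c} ⊆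
      Set.pi Set.univ (fun i' => if i' = i then ({c} : Set ℝ) else Set.univ) := by
    intro x hx i' _
    by_cases h : i' = i
    · subst h; simpa using hx
    · simp [h]
  refine measure_mono_null hsub ?_
  rw [volume_pi_pi]
  refine Finset.prod_eq_zero (Finset.mem_univ i) ?_
  simp

lemma floor_ae (n j : ℕ) (m' : Fin n → ℤ) :
    ∀ᵐ x ∂ volume.restrict (dyadicCube n j m'), (fun i => ⌊x i * 2 ^ j⌋) = m' := by
  rw [ae_restrict_iff' (measurableSet_dyadicCube n j m')]
  have hb : ∀ᵐ x : Fin n → ℝ, ∀ i, x i ≠ ((m' i : ℝ) + 1) / 2 ^ j := by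
    rw [ae_all_iff]
    intro i
    have := measure_eval_eq_zero n i (((m' i : ℝ) + 1) / 2 ^ j)
    rw [ae_iff]
    simpa using this
  filter_upwards [hb] with x hx hxcube
  funext i
  rw [Int.floor_eq_iff]
  have hpow : (0:ℝ) < 2 ^ j := by positivity
  constructor
  · have := (hxcube i).1
    rw [div_le_iff₀ hpow] at this
    linarith
  · have h2 := (hxcube i).2
    have h2' : x i < ((m' i : ℝ) + 1) / 2 ^ j := lt_of_le_of_ne h2 (hx i)
    rw [lt_div_iff₀ hpow] at h2'
    push_cast
    linarith

lemma tkm_tbar (n : ℕ) (p : ℝ≥0∞) (hp : p ≠ 0) (t : ℕ → (Fin n → ℝ) → ℝ)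
    (j : ℕ) (m' : Fin n → ℤ) (hfin : tkm n p t j m' ≠ ∞) :
    tkm n p (tbar n p t) j m' = tkm n p t j m' := by
  set S := tkm n p t j m' with hS
  set a : ℝ := ((j * n : ℕ) : ℝ) / p.toReal with ha
  have hae : (tbar n p t j) =ᵐ[volume.restrict (dyadicCube n j m')]
      (fun _ => (2:ℝ) ^ a * S.toReal) := by
    filter_upwards [floor_ae n j m'] with x hx
    simp only [tbar, hx, hS, ha]
  have hμ : volume.restrict (dyadicCube n j m') ≠ 0 := by
    rw [Ne, Measure.restrict_eq_zero]
    exact volume_dyadicCube_ne_zero n j m'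
  rw [show tkm n p (tbar n p t) j m'
      = eLpNorm (tbar n p t j) p (volume.restrict (dyadicCube n j m')) from rfl,
    eLpNorm_congr_ae hae, eLpNorm_const _ hp hμ]
  rw [Measure.restrict_apply_univ, volume_dyadicCube]
  have hc : (0:ℝ) ≤ (2:ℝ) ^ a * S.toReal := by positivity
  rw [← ofReal_norm, Real.norm_of_nonneg hc,
    ENNReal.ofReal_mul (by positivity), ENNReal.ofReal_toReal hfin]
  have h2 : (ENNReal.ofReal ((2:ℝ) ^ a)) = (2:ℝ≥0∞) ^ a := by
    rw [← ENNReal.ofReal_rpow_of_pos (by norm_num : (0:ℝ) < 2)]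
    norm_num
  rw [h2]
  have h3 : (((2:ℝ≥0∞) ^ (j * n))⁻¹) ^ (1 / p.toReal) = (2:ℝ≥0∞) ^ (-(((j*n:ℕ):ℝ) / p.toReal)) := by
    rw [← ENNReal.rpow_natCast (2:ℝ≥0∞) (j*n), ← ENNReal.rpow_neg,
      ← ENNReal.rpow_mul]
    ring_nf
  rw [h3, mul_comm ((2:ℝ≥0∞)^a) S, mul_assoc, ← ENNReal.rpow_add _ _ (by norm_num) (by norm_num)]
  rw [ha]
  ring_nf
  simp

lemma ofReal_two_rpow (x : ℝ) : ENNReal.ofReal ((2:ℝ) ^ x) = (2:ℝ≥0∞) ^ x := by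
  rw [← ENNReal.ofReal_rpow_of_pos (by norm_num : (0:ℝ) < 2)]
  norm_num

lemma E_ne_zero (x : ℝ) : (2:ℝ≥0∞) ^ x ≠ 0 :=
  (ENNReal.rpow_pos (by norm_num) (by norm_num)).ne'

lemma E_ne_top (x : ℝ) : (2:ℝ≥0∞) ^ x ≠ ∞ := by
  rcases le_or_gt 0 x with h | h
  · exact ENNReal.rpow_ne_top_of_nonneg h (by norm_num)
  · rw [show x = -(-x) by ring, ENNReal.rpow_neg]
    rw [Ne, ENNReal.inv_eq_top]
    exact E_ne_zero _

lemma E_mul (x y : ℝ) : (2:ℝ≥0∞) ^ x * (2:ℝ≥0∞) ^ y = (2:ℝ≥0∞) ^ (x + y) :=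
  (ENNReal.rpow_add x y (by norm_num) (by norm_num)).symm

lemma pow_inv_rpow (N : ℕ) (y : ℝ) :
    (((2:ℝ≥0∞) ^ N)⁻¹) ^ y = (2:ℝ≥0∞) ^ (-((N:ℝ) * y)) := by
  rw [← ENNReal.rpow_natCast (2:ℝ≥0∞) N, ← ENNReal.rpow_neg, ← ENNReal.rpow_mul, neg_mul]

lemma pow_rpow (N : ℕ) (y : ℝ) :
    ((2:ℝ≥0∞) ^ N) ^ y = (2:ℝ≥0∞) ^ ((N:ℝ) * y) := by
  rw [← ENNReal.rpow_natCast (2:ℝ≥0∞) N, ← ENNReal.rpow_mul]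

lemma eLpNorm_tbar_subcube (n : ℕ) (p σ : ℝ≥0∞) (hσ : σ ≠ 0) (t : ℕ → (Fin n → ℝ) → ℝ)
    (j : ℕ) (m' : Fin n → ℤ) (hfin : tkm n p t j m' ≠ ∞) :
    eLpNorm (tbar n p t j) σ (volume.restrict (dyadicCube n j m'))
      = (2:ℝ≥0∞) ^ (((j * n : ℕ) : ℝ) / p.toReal + -(((j * n : ℕ):ℝ) * σ⁻¹.toReal))
        * tkm n p t j m' := by
  set S := tkm n p t j m' with hS
  set a : ℝ := ((j * n : ℕ) : ℝ) / p.toReal with ha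
  have hae : (tbar n p t j) =ᵐ[volume.restrict (dyadicCube n j m')]
      (fun _ => (2:ℝ) ^ a * S.toReal) := by
    filter_upwards [floor_ae n j m'] with x hx
    simp only [tbar, hx, hS, ha]
  have hμ : volume.restrict (dyadicCube n j m') ≠ 0 := by
    rw [Ne, Measure.restrict_eq_zero]; exact volume_dyadicCube_ne_zero n j m'
  rw [eLpNorm_congr_ae hae, eLpNorm_const _ hσ hμ, Measure.restrict_apply_univ,
    volume_dyadicCube]
  have hc : (0:ℝ) ≤ (2:ℝ) ^ a * S.toReal := by positivity
  rw [← ofReal_norm, Real.norm_of_nonneg hc,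
    ENNReal.ofReal_mul (by positivity), ENNReal.ofReal_toReal hfin, ofReal_two_rpow,
    pow_inv_rpow, one_div, ← ENNReal.toReal_inv]
  rw [mul_comm ((2:ℝ≥0∞)^a) S, mul_assoc, E_mul, mul_comm]

lemma eLpNorm_inv_tbar_subcube (n : ℕ) (p σ : ℝ≥0∞) (hσ : σ ≠ 0) (t : ℕ → (Fin n → ℝ) → ℝ)
    (j : ℕ) (m' : Fin n → ℤ) (hpos : tkm n p t j m' ≠ 0) (hfin : tkm n p t j m' ≠ ∞) :
    eLpNorm (fun x => (tbar n p t j x)⁻¹) σ (volume.restrict (dyadicCube n j m'))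
      = (2:ℝ≥0∞) ^ (-(((j * n : ℕ) : ℝ) / p.toReal) + -(((j * n : ℕ):ℝ) * σ⁻¹.toReal))
        * (tkm n p t j m')⁻¹ := by
  set S := tkm n p t j m' with hS
  set a : ℝ := ((j * n : ℕ) : ℝ) / p.toReal with ha
  have hStR : 0 < S.toReal := ENNReal.toReal_pos hpos hfin
  have hae : (fun x => (tbar n p t j x)⁻¹) =ᵐ[volume.restrict (dyadicCube n j m')]
      (fun _ => ((2:ℝ) ^ a * S.toReal)⁻¹) := by
    filter_upwards [floor_ae n j m'] with x hx
    simp only [tbar, hx, hS, ha]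
  have hμ : volume.restrict (dyadicCube n j m') ≠ 0 := by
    rw [Ne, Measure.restrict_eq_zero]; exact volume_dyadicCube_ne_zero n j m'
  rw [eLpNorm_congr_ae hae, eLpNorm_const _ hσ hμ, Measure.restrict_apply_univ,
    volume_dyadicCube]
  have hc : (0:ℝ) < (2:ℝ) ^ a * S.toReal := by positivity
  rw [← ofReal_norm, Real.norm_of_nonneg (le_of_lt (inv_pos.mpr hc)),
    ENNReal.ofReal_inv_of_pos hc,
    ENNReal.ofReal_mul (by positivity), ENNReal.ofReal_toReal hfin, ofReal_two_rpow,
    pow_inv_rpow, one_div, ← ENNReal.toReal_inv]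
  rw [ENNReal.mul_inv (Or.inl (E_ne_zero a)) (Or.inl (E_ne_top a)), ← ENNReal.rpow_neg]
  rw [mul_comm ((2:ℝ≥0∞)^(-a)) S⁻¹, mul_assoc, E_mul, mul_comm]


/-- two-sided comparison (2.8) of local norms on nested dyadic cubes. -/
theorem weight_two_sided_comparison (n : ℕ) (p σ₁ σ₂ : ℝ≥0∞) (α₁ α₂ α₃ : ℝ)
    (hp : 0 < p) (hσ₁ : 0 < σ₁) (hσ₂ : 0 < σ₂) (hα₃ : 0 ≤ α₃)
    (t : ℕ → (Fin n → ℝ) → ℝ) (hadm : PAdmissible n p t)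
    (ht : MemX n p σ₁ σ₂ α₁ α₂ α₃ (tbar n p t)) :
    ∀ d : ℕ, ∃ C : ℝ, 0 < C ∧ ∀ (k : ℕ) (m m' : Fin n → ℤ),
      dyadicCube n (k + d) m' ⊆ dyadicCube n k m →
        (ENNReal.ofReal C)⁻¹ * tkm n p t (k + d) m' ≤ tkm n p t k m ∧
        tkm n p t k m ≤ ENNReal.ofReal C * tkm n p t (k + d) m' := by
  intro d
  obtain ⟨-, ⟨C₁, hC₁, h1⟩, ⟨C₂, hC₂, h2⟩, hposbar, -⟩ := ht
  have hfin : ∀ j m', tkm n p t j m' ≠ ∞ := fun j m' => (hadm.2.2 j m').ne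
  have htb : ∀ j m', tkm n p (tbar n p t) j m' = tkm n p t j m' :=
    fun j m' => tkm_tbar n p hp.ne' t j m' (hfin j m')
  have hpos : ∀ j m', tkm n p t j m' ≠ 0 := by
    intro j m'; have := hposbar j m'; rw [htb] at this; exact this.ne'
  set x1 : ℝ := α₁ * (-(d:ℝ)) + ((d*n:ℕ):ℝ) * (p⁻¹.toReal + σ₁⁻¹.toReal) with hx1
  set x2 : ℝ := α₂ * (d:ℝ) + ((d*n:ℕ):ℝ) * (σ₂⁻¹.toReal - p⁻¹.toReal) with hx2
  refine ⟨C₁ * 2 ^ x1 + C₂ * 2 ^ x2, by positivity, ?_⟩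
  intro k m m' hsub
  set j := k + d with hj
  have hkj : k ≤ j := Nat.le_add_right k d
  set T := tkm n p t k m with hT
  set S := tkm n p t j m' with hS
  set C : ℝ := C₁ * 2 ^ x1 + C₂ * 2 ^ x2 with hC
  have hCpos : (0:ℝ) < C := by rw [hC]; positivity
  have hC1le : C₁ * 2 ^ x1 ≤ C := by rw [hC]; nlinarith [Real.rpow_pos_of_pos (by norm_num : (0:ℝ) < 2) x2]
  have hC2le : C₂ * 2 ^ x2 ≤ C := by rw [hC]; nlinarith [Real.rpow_pos_of_pos (by norm_num : (0:ℝ) < 2) x1]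
  have hSS : S⁻¹ * S = 1 := ENNReal.inv_mul_cancel (hpos j m') (hfin j m')
  -- exponents
  set u : ℝ := ((k*n : ℕ):ℝ) * p⁻¹.toReal with hu
  set v : ℝ := ((k*n : ℕ):ℝ) * σ₁⁻¹.toReal with hv
  set w : ℝ := -(((j*n:ℕ):ℝ) / p.toReal) + -(((j*n:ℕ):ℝ) * σ₁⁻¹.toReal) with hw
  -- UPPER BOUND
  have h1' := h1 k j hkj m
  rw [htb k m] at h1'
  have hmono1 : (2:ℝ≥0∞) ^ w * S⁻¹
      ≤ eLpNorm (fun x => (tbar n p t j x)⁻¹) σ₁ (volume.restrict (dyadicCube n k m)) := by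
    rw [hw, hS]
    rw [← eLpNorm_inv_tbar_subcube n p σ₁ hσ₁.ne' t j m' (hpos j m') (hfin j m')]
    exact eLpNorm_mono_measure _ (Measure.restrict_mono hsub le_rfl)
  have key1 : (2:ℝ≥0∞)^(u+v+w) * (T * S⁻¹)
      ≤ ENNReal.ofReal (C₁ * 2 ^ (α₁ * ((k:ℝ) - (j:ℝ)))) := by
    calc (2:ℝ≥0∞)^(u+v+w) * (T * S⁻¹)
        = ((2:ℝ≥0∞)^u * T) * ((2:ℝ≥0∞)^v * ((2:ℝ≥0∞)^w * S⁻¹)) := by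
          rw [← E_mul, ← E_mul]; ring
      _ = ((2:ℝ≥0∞)^(k*n))^p⁻¹.toReal * T
            * (((2:ℝ≥0∞)^(k*n))^σ₁⁻¹.toReal * ((2:ℝ≥0∞)^w * S⁻¹)) := by
          rw [pow_rpow, pow_rpow, hu, hv]
      _ ≤ ((2:ℝ≥0∞)^(k*n))^p⁻¹.toReal * T
            * (((2:ℝ≥0∞)^(k*n))^σ₁⁻¹.toReal
              * eLpNorm (fun x => (tbar n p t j x)⁻¹) σ₁ (volume.restrict (dyadicCube n k m))) :=
          mul_le_mul_right (mul_le_mul_right hmono1 _) _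
      _ ≤ _ := h1'
  have hupper : T ≤ ENNReal.ofReal (C₁ * 2 ^ x1) * S := by
    have h0 : (2:ℝ≥0∞)^(u+v+w) * (2:ℝ≥0∞)^(-(u+v+w)) = 1 := by
      rw [E_mul, show u+v+w + -(u+v+w) = (0:ℝ) by ring, ENNReal.rpow_zero]
    have hTeq : T = ((2:ℝ≥0∞)^(u+v+w) * (T * S⁻¹)) * ((2:ℝ≥0∞)^(-(u+v+w)) * S) := by
      calc T = ((2:ℝ≥0∞)^(u+v+w) * (2:ℝ≥0∞)^(-(u+v+w))) * ((S⁻¹ * S) * T) := by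
            rw [h0, hSS]; ring
        _ = _ := by ring
    calc T = ((2:ℝ≥0∞)^(u+v+w) * (T * S⁻¹)) * ((2:ℝ≥0∞)^(-(u+v+w)) * S) := hTeq
      _ ≤ ENNReal.ofReal (C₁ * 2 ^ (α₁ * ((k:ℝ) - (j:ℝ)))) * ((2:ℝ≥0∞)^(-(u+v+w)) * S) :=
          mul_le_mul_left key1 _
      _ = (ENNReal.ofReal C₁ * ((2:ℝ≥0∞) ^ (α₁ * ((k:ℝ) - (j:ℝ))) * (2:ℝ≥0∞)^(-(u+v+w)))) * S := by
          rw [ENNReal.ofReal_mul hC₁.le, ofReal_two_rpow]; ring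
      _ = (ENNReal.ofReal C₁ * (2:ℝ≥0∞) ^ (α₁ * ((k:ℝ) - (j:ℝ)) + -(u+v+w))) * S := by
          rw [E_mul]
      _ = ENNReal.ofReal (C₁ * 2 ^ x1) * S := by
          rw [ENNReal.ofReal_mul hC₁.le, ofReal_two_rpow]
          have hexp : α₁ * ((k:ℝ) - (j:ℝ)) + -(u+v+w) = x1 := by
            rw [hu, hv, hw, hx1]
            simp only [hj, ENNReal.toReal_inv]
            push_cast
            ring
          rw [hexp]
  -- LOWER BOUND
  set a2 : ℝ := ((j*n:ℕ):ℝ)/p.toReal + -(((j*n:ℕ):ℝ) * σ₂⁻¹.toReal) with ha2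
  set v2 : ℝ := ((k*n:ℕ):ℝ) * σ₂⁻¹.toReal with hv2
  have h2' := h2 k j hkj m
  rw [htb k m] at h2'
  have hmono2 : (2:ℝ≥0∞) ^ a2 * S
      ≤ eLpNorm (tbar n p t j) σ₂ (volume.restrict (dyadicCube n k m)) := by
    rw [ha2, hS]
    rw [← eLpNorm_tbar_subcube n p σ₂ hσ₂.ne' t j m' (hfin j m')]
    exact eLpNorm_mono_measure _ (Measure.restrict_mono hsub le_rfl)
  have key2 : (2:ℝ≥0∞)^(v2 + a2) * S
      ≤ ENNReal.ofReal (C₂ * 2 ^ (α₂ * ((j:ℝ) - (k:ℝ)))) * ((2:ℝ≥0∞)^u * T) := by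
    calc (2:ℝ≥0∞)^(v2+a2) * S = (2:ℝ≥0∞)^v2 * ((2:ℝ≥0∞)^a2 * S) := by
          rw [← E_mul]; ring
      _ = ((2:ℝ≥0∞)^(k*n))^σ₂⁻¹.toReal * ((2:ℝ≥0∞)^a2 * S) := by rw [pow_rpow, hv2]
      _ ≤ ((2:ℝ≥0∞)^(k*n))^σ₂⁻¹.toReal
            * eLpNorm (tbar n p t j) σ₂ (volume.restrict (dyadicCube n k m)) :=
          mul_le_mul_right hmono2 _
      _ ≤ ENNReal.ofReal (C₂ * 2 ^ (α₂ * ((j:ℝ) - (k:ℝ))))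
            * (((2:ℝ≥0∞)^(k*n))^p⁻¹.toReal * T) := h2'
      _ = ENNReal.ofReal (C₂ * 2 ^ (α₂ * ((j:ℝ) - (k:ℝ)))) * ((2:ℝ≥0∞)^u * T) := by
          rw [pow_rpow, hu]
  have hlower : S ≤ ENNReal.ofReal (C₂ * 2 ^ x2) * T := by
    have h0 : (2:ℝ≥0∞)^(-(v2+a2)) * (2:ℝ≥0∞)^(v2+a2) = 1 := by
      rw [E_mul, show -(v2+a2) + (v2+a2) = (0:ℝ) by ring, ENNReal.rpow_zero]
    calc S = ((2:ℝ≥0∞)^(-(v2+a2)) * (2:ℝ≥0∞)^(v2+a2)) * S := by rw [h0, one_mul]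
      _ = ((2:ℝ≥0∞)^(v2+a2) * S) * (2:ℝ≥0∞)^(-(v2+a2)) := by ring
      _ ≤ (ENNReal.ofReal (C₂ * 2 ^ (α₂ * ((j:ℝ) - (k:ℝ)))) * ((2:ℝ≥0∞)^u * T))
            * (2:ℝ≥0∞)^(-(v2+a2)) := mul_le_mul_left key2 _
      _ = (ENNReal.ofReal C₂ * ((2:ℝ≥0∞)^(α₂ * ((j:ℝ) - (k:ℝ)))
            * ((2:ℝ≥0∞)^u * (2:ℝ≥0∞)^(-(v2+a2))))) * T := by
          rw [ENNReal.ofReal_mul hC₂.le, ofReal_two_rpow]; ring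
      _ = (ENNReal.ofReal C₂ * (2:ℝ≥0∞)^(α₂ * ((j:ℝ) - (k:ℝ)) + (u + -(v2+a2)))) * T := by
          rw [E_mul, E_mul]
      _ = ENNReal.ofReal (C₂ * 2 ^ x2) * T := by
          rw [ENNReal.ofReal_mul hC₂.le, ofReal_two_rpow]
          have hexp : α₂ * ((j:ℝ) - (k:ℝ)) + (u + -(v2+a2)) = x2 := by
            rw [hu, hv2, ha2, hx2]
            simp only [hj, ENNReal.toReal_inv]
            push_cast
            ring
          rw [hexp]
  constructor
  · calc (ENNReal.ofReal C)⁻¹ * S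
        ≤ (ENNReal.ofReal C)⁻¹ * (ENNReal.ofReal C * T) := by
          refine mul_le_mul_right ?_ _
          exact le_trans hlower (mul_le_mul_left (ENNReal.ofReal_le_ofReal hC2le) T)
      _ = T := by
          rw [← mul_assoc, ENNReal.inv_mul_cancel ((ENNReal.ofReal_pos.mpr hCpos).ne')
            ENNReal.ofReal_ne_top, one_mul]
  · exact le_trans hupper (mul_le_mul_left (ENNReal.ofReal_le_ofReal hC1le) S)
end
end
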